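/- Let G_ω be an edge-weighted graph and H_ω an induced subgraph of G_ω, and let k be a positive integer. If the power I(G_ω)^k is integrally closed, then I(H_ω)^k is also integrally closed. -/

import Mathlib

open MvPolynomial

/-- The edge ideal of an edge-weighted graph `G` with weight function `w`. -/
noncomputable def edgeIdeal (K : Type*) [Field K] {n : ℕ}
    (G : SimpleGraph (Fin n)) (w : Sym2 (Fin n) → ℕ) :
    Ideal (MvPolynomial (Fin n) K) :=
  Ideal.span {m | ∃ i j : Fin n, G.Adj i j ∧ m = X i ^ w s(i, j) * X j ^ w s(i, j)}

/-- The integral closure of an ideal `I`. -/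
def intClosure {R : Type*} [CommRing R] (I : Ideal R) : Set R :=
  {f | ∃ k : ℕ, 0 < k ∧ ∃ c : ℕ → R,
    (∀ i ∈ Finset.Icc 1 k, c i ∈ I ^ i) ∧
    f ^ k + ∑ i ∈ Finset.Icc 1 k, c i * f ^ (k - i) = 0}

/-- An ideal is integrally closed if it equals its integral closure. -/
def IsIntClosed {R : Type*} [CommRing R] (I : Ideal R) : Prop :=
  intClosure I = ↑I

/-- `(H, wH)` is an induced (weighted) subgraph of `(G, wG)`: there is a vertex subset `A`
such that the edges of `H` are exactly the edges of `G` with both endpoints in `A`,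
and weights of edges of `H` agree with those in `G`. -/
def IsInducedWeightedSubgraph {n : ℕ} (G : SimpleGraph (Fin n)) (wG : Sym2 (Fin n) → ℕ)
    (H : SimpleGraph (Fin n)) (wH : Sym2 (Fin n) → ℕ) : Prop :=
  ∃ A : Set (Fin n), (∀ i j : Fin n, H.Adj i j ↔ (i ∈ A ∧ j ∈ A ∧ G.Adj i j)) ∧
    (∀ i j : Fin n, H.Adj i j → wH s(i, j) = wG s(i, j))

namespace EdgeIdealAux
section Sa

variable {R : Type*} [CommRing R] {J : Ideal R}

theorem mem_intClosure_of_mem {x : R} (hx : x ∈ J) : x ∈ intClosure J := by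
  refine ⟨1, one_pos, fun _ => -x, fun i hi => ?_, ?_⟩
  · simp only [Finset.mem_Icc] at hi
    obtain rfl : i = 1 := le_antisymm hi.2 hi.1
    simpa using J.neg_mem hx
  · simp

theorem intClosure_mono {J₂ : Ideal R} (h : J ≤ J₂) : intClosure J ⊆ intClosure J₂ := by
  rintro f ⟨k, hk, c, hc, he⟩
  exact ⟨k, hk, c, fun i hi => Ideal.pow_right_mono h i (hc i hi), he⟩

theorem mul_mem_intClosure (g : R) {f : R} (hf : f ∈ intClosure J) : g * f ∈ intClosure J := by
  obtain ⟨k, hk, c, hc, he⟩ := hf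
  refine ⟨k, hk, fun i => g ^ i * c i, fun i hi => Ideal.mul_mem_left _ _ (hc i hi), ?_⟩
  have h2 : ∀ i ∈ Finset.Icc 1 k, g ^ i * c i * (g * f) ^ (k - i) = g ^ k * (c i * f ^ (k - i)) := by
    intro i hi
    simp only [Finset.mem_Icc] at hi
    rw [mul_pow, show g ^ i * c i * (g ^ (k-i) * f ^ (k-i)) =
      (g ^ i * g ^ (k-i)) * (c i * f ^ (k-i)) by ring, ← pow_add, Nat.add_sub_cancel' hi.2]
  rw [Finset.sum_congr rfl h2, ← Finset.mul_sum, mul_pow, ← mul_add, he, mul_zero]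

theorem map_mem_intClosure {R₂ : Type*} [CommRing R₂] (ψ : R →+* R₂) {J₂ : Ideal R₂}
    (h : Ideal.map ψ J ≤ J₂) {f : R} (hf : f ∈ intClosure J) : ψ f ∈ intClosure J₂ := by
  obtain ⟨k, hk, c, hc, he⟩ := hf
  refine ⟨k, hk, fun i => ψ (c i), fun i hi => ?_, ?_⟩
  · have h1 : ψ (c i) ∈ Ideal.map ψ (J ^ i) := Ideal.mem_map_of_mem ψ (hc i hi)
    rw [Ideal.map_pow] at h1
    exact Ideal.pow_right_mono h i h1
  · have h2 := congrArg ψ he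
    simpa only [map_add, map_pow, map_sum, map_mul, map_zero] using h2

end Sa
section Sb

variable {R : Type*} [CommRing R] {J : Ideal R}

theorem intClosure_iff_isIntegral [Nontrivial R] {f : R} :
    f ∈ intClosure J ↔ IsIntegral (reesAlgebra J) (Polynomial.C f * Polynomial.X) := by
  constructor
  · rintro ⟨k, hk, c, hc, he⟩
    have hmem : ∀ i ∈ Finset.Icc 1 k,
        (Polynomial.C (c i) * Polynomial.X ^ i) ∈ reesAlgebra J := by
      intro i hi
      rw [mem_reesAlgebra_iff]
      intro m
      rw [Polynomial.coeff_C_mul, Polynomial.coeff_X_pow]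
      split_ifs with hmi
      · subst hmi; simpa using hc _ hi
      · simp
    refine ⟨Polynomial.X ^ k + ∑ i ∈ (Finset.Icc 1 k).attach,
        Polynomial.C (⟨_, hmem i.1 i.2⟩ : reesAlgebra J) * Polynomial.X ^ (k - i.1), ?_, ?_⟩
    · apply Polynomial.monic_X_pow_add
      refine lt_of_le_of_lt (Polynomial.degree_sum_le _ _) ?_
      rw [Finset.sup_lt_iff (by exact_mod_cast WithBot.bot_lt_coe k)]
      intro i _
      refine lt_of_le_of_lt (Polynomial.degree_C_mul_X_pow_le _ _) ?_
      have hi := i.2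
      simp only [Finset.mem_Icc] at hi
      exact_mod_cast Nat.sub_lt hk hi.1
    · rw [Polynomial.eval₂_add, Polynomial.eval₂_pow, Polynomial.eval₂_X,
        Polynomial.eval₂_finset_sum]
      have hterm : ∀ i ∈ (Finset.Icc 1 k).attach,
          Polynomial.eval₂ (algebraMap (reesAlgebra J) (Polynomial R))
            (Polynomial.C f * Polynomial.X)
            (Polynomial.C (⟨_, hmem i.1 i.2⟩ : reesAlgebra J) * Polynomial.X ^ (k - i.1))
          = Polynomial.C (c i.1 * f ^ (k - i.1)) * Polynomial.X ^ k := by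
        intro i hi
        have h2 := i.2
        simp only [Finset.mem_Icc] at h2
        rw [Polynomial.eval₂_mul, Polynomial.eval₂_C, Polynomial.eval₂_pow, Polynomial.eval₂_X]
        have : (algebraMap (reesAlgebra J) (Polynomial R)) (⟨_, hmem i.1 i.2⟩ : reesAlgebra J)
            = Polynomial.C (c i.1) * Polynomial.X ^ i.1 := rfl
        rw [this, mul_pow, ← Polynomial.C_pow,
          show Polynomial.C (c i.1) * Polynomial.X ^ i.1 *
              (Polynomial.C (f ^ (k - i.1)) * Polynomial.X ^ (k - i.1))
            = Polynomial.C (c i.1 * f ^ (k - i.1)) * (Polynomial.X ^ i.1 * Polynomial.X ^ (k-i.1))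
            by rw [Polynomial.C_mul]; ring, ← pow_add, Nat.add_sub_cancel' h2.2]
      rw [Finset.sum_congr rfl hterm, mul_pow, ← Polynomial.C_pow, Finset.sum_attach _
        (fun i => Polynomial.C (c i * f ^ (k - i)) * Polynomial.X ^ k), ← Finset.sum_mul,
        ← map_sum, ← add_mul, ← Polynomial.C_add, he, Polynomial.C_0, zero_mul]
  · rintro ⟨P, hmonic, heval⟩
    set d := P.natDegree with hd
    have hd0 : 0 < d := by
      rcases Nat.eq_zero_or_pos d with h0 | h
      · exfalso
        have : P = 1 := by
          have := (Polynomial.Monic.natDegree_eq_zero hmonic).mp h0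
          exact this
        rw [this] at heval
        simp at heval
      · exact h
    refine ⟨d, hd0, fun i => (↑(P.coeff (d - i)) : Polynomial R).coeff i, fun i hi => ?_, ?_⟩
    · exact (mem_reesAlgebra_iff J (↑(P.coeff (d - i)))).mp (P.coeff (d - i)).2 i
    · rw [Polynomial.eval₂_eq_sum_range] at heval
      have h1 := congrArg (fun q => Polynomial.coeff q d) heval
      simp only [Polynomial.finset_sum_coeff, Polynomial.coeff_zero] at h1
      have hterm : ∀ j ∈ Finset.range (d + 1),
          Polynomial.coeff ((algebraMap (reesAlgebra J) (Polynomial R)) (P.coeff j) *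
            (Polynomial.C f * Polynomial.X) ^ j) d
          = (↑(P.coeff j) : Polynomial R).coeff (d - j) * f ^ j := by
        intro j hj
        simp only [Finset.mem_range] at hj
        rw [mul_pow, ← Polynomial.C_pow, ← mul_assoc, Polynomial.coeff_mul_X_pow',
          if_pos (by omega : j ≤ d), Polynomial.coeff_mul_C]
        rfl
      rw [Finset.sum_congr rfl hterm, Finset.sum_range_succ] at h1
      have hlead : (↑(P.coeff d) : Polynomial R).coeff (d - d) * f ^ d = f ^ d := by
        rw [hmonic.coeff_natDegree]
        simp
      rw [hlead] at h1
      have hre : ∑ j ∈ Finset.range d, (↑(P.coeff j) : Polynomial R).coeff (d - j) * f ^ j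
          = ∑ i ∈ Finset.Icc 1 d, (↑(P.coeff (d - i)) : Polynomial R).coeff i * f ^ (d - i) := by
        refine Finset.sum_nbij' (fun j => d - j) (fun i => d - i) ?_ ?_ ?_ ?_ ?_
        · intro j hj; simp only [Finset.mem_range] at hj
          show d - j ∈ Finset.Icc 1 d
          simp only [Finset.mem_Icc]; omega
        · intro i hi; simp only [Finset.mem_Icc] at hi
          show d - i ∈ Finset.range d
          simp only [Finset.mem_range]; omega
        · intro j hj; simp only [Finset.mem_range] at hj
          show d - (d - j) = j
          omega
        · intro i hi; simp only [Finset.mem_Icc] at hi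
          show d - (d - i) = i
          omega
        · intro j hj; simp only [Finset.mem_range] at hj
          show _ = (↑(P.coeff (d - (d - j))) : Polynomial R).coeff (d - j) * f ^ (d - (d - j))
          rw [show d - (d - j) = j by omega]
      rw [hre] at h1
      rw [add_comm] at h1
      exact h1

theorem sub_mem_intClosure [Nontrivial R] {f g : R} (hf : f ∈ intClosure J)
    (hg : g ∈ intClosure J) : f - g ∈ intClosure J := by
  rw [intClosure_iff_isIntegral] at hf hg ⊢
  have := hf.sub hg
  have heq : Polynomial.C f * Polynomial.X - Polynomial.C g * Polynomial.X
      = Polynomial.C (f - g) * Polynomial.X := by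
    rw [Polynomial.C_sub, sub_mul]
  rwa [heq] at this

end Sb
section Sc

variable {σ : Type*}

/-- `i`-fold sumset of a set of exponent vectors. -/
def msum (M : Set (σ →₀ ℕ)) : ℕ → Set (σ →₀ ℕ)
  | 0 => {0}
  | (i + 1) => {e | ∃ a ∈ msum M i, ∃ b ∈ M, e = a + b}

theorem msum_mono {M M' : Set (σ →₀ ℕ)} (h : M ⊆ M') (i : ℕ) : msum M i ⊆ msum M' i := by
  induction i with
  | zero => exact le_refl _
  | succ i ih =>
    rintro e ⟨a, ha, b, hb, rfl⟩
    exact ⟨a, ih ha, b, h hb, rfl⟩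

theorem msum_trans {M M' : Set (σ →₀ ℕ)} {β : σ →₀ ℕ}
    (h : ∀ g ∈ M, g ≤ β → g ∈ M') :
    ∀ i, ∀ e ∈ msum M i, e ≤ β → e ∈ msum M' i := by
  intro i
  induction i with
  | zero => intro e he _; exact he
  | succ i ih =>
    rintro e ⟨a, ha, b, hb, rfl⟩ hle
    have hab : a ≤ a + b := le_self_add
    have hbb : b ≤ a + b := le_add_self
    exact ⟨a, ih a ha (le_trans hab hle), b, h b hb (le_trans hbb hle), rfl⟩

variable {R : Type*} [CommRing R]

theorem span_monomial_pow (M : Set (σ →₀ ℕ)) (i : ℕ) :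
    (Ideal.span ((fun d => monomial d (1 : R)) '' M)) ^ i
      = Ideal.span ((fun d => monomial d (1 : R)) '' msum M i) := by
  induction i with
  | zero =>
    rw [pow_zero]
    have : (fun d => monomial d (1 : R)) '' msum M 0 = {1} := by
      ext p
      simp only [msum, Set.image_singleton, Set.mem_singleton_iff]
      constructor
      · rintro rfl; rfl
      · rintro rfl
        rw [← C_1, C_apply]
    rw [this, Ideal.span_singleton_one, Ideal.one_eq_top]
  | succ i ih =>
    rw [pow_succ, ih, Ideal.span_mul_span']
    congr 1
    ext p
    constructor
    · rintro ⟨x, ⟨a, ha, rfl⟩, y, ⟨b, hb, rfl⟩, rfl⟩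
      exact ⟨a + b, ⟨a, ha, b, hb, rfl⟩, by simp [monomial_mul]⟩
    · rintro ⟨e, ⟨a, ha, b, hb, rfl⟩, rfl⟩
      exact ⟨monomial a 1, ⟨a, ha, rfl⟩, monomial b 1, ⟨b, hb, rfl⟩,
        by simp [monomial_mul]⟩

theorem monomial_one_mem_span_iff [Nontrivial R] {M : Set (σ →₀ ℕ)} {e : σ →₀ ℕ} :
    monomial e (1 : R) ∈ Ideal.span ((fun d => monomial d (1 : R)) '' M)
      ↔ ∃ d ∈ M, d ≤ e := by
  rw [mem_ideal_span_monomial_image]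
  classical
  rw [support_monomial, if_neg (one_ne_zero)]
  constructor
  · intro h; exact h e (Finset.mem_singleton_self e)
  · intro h x hx
    rw [Finset.mem_singleton] at hx
    subst hx; exact h

end Sc


section Stau

variable {σ : Type*} {L : Type*} [Field L] (c : σ → L)

/-- The "eigenvalue" of the scaling map on the monomial with exponent `d`. -/
noncomputable def eig (d : σ →₀ ℕ) : L := d.prod fun j e => c j ^ e

/-- The scaling algebra map `x_j ↦ c_j x_j`. -/
noncomputable def tau : MvPolynomial σ L →ₐ[L] MvPolynomial σ L :=
  aeval (fun j => C (c j) * X j)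

theorem tau_monomial (d : σ →₀ ℕ) (a : L) :
    tau c (monomial d a) = monomial d (eig c d * a) := by
  rw [tau, aeval_monomial]
  have h1 : (d.prod fun i k => (C (c i) * X i) ^ k)
      = C (eig c d) * (d.prod fun i k => (X i : MvPolynomial σ L) ^ k) := by
    rw [eig, Finsupp.prod, Finsupp.prod, Finsupp.prod, map_prod, ← Finset.prod_mul_distrib]
    apply Finset.prod_congr rfl
    intro j _
    rw [mul_pow, map_pow]
  rw [h1, ← mul_assoc]
  have : (algebraMap L (MvPolynomial σ L)) a * C (eig c d) = C (eig c d * a) := by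
    rw [algebraMap_eq, ← C_mul, mul_comm]
  rw [this]
  exact (monomial_eq).symm

theorem coeff_tau (f : MvPolynomial σ L) (γ : σ →₀ ℕ) :
    coeff γ (tau c f) = eig c γ * coeff γ f := by
  induction f using MvPolynomial.induction_on' with
  | monomial d a =>
    rw [tau_monomial]
    classical
    rw [coeff_monomial, coeff_monomial]
    split_ifs with h
    · subst h; rfl
    · rw [mul_zero]
  | add p q hp hq =>
    rw [map_add, coeff_add, coeff_add, hp, hq, mul_add]

end Stau

section Sext

variable {σ : Type*} {L : Type*} [Field L] {c : σ → L}

theorem tau_map_span_le (M : Set (σ →₀ ℕ)) :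
    Ideal.map (tau c).toRingHom (Ideal.span ((fun d => monomial d (1 : L)) '' M))
      ≤ Ideal.span ((fun d => monomial d (1 : L)) '' M) := by
  rw [Ideal.map_span, Ideal.span_le]
  rintro p ⟨q, ⟨d, hd, rfl⟩, rfl⟩
  show ((tau c) (monomial d 1) : MvPolynomial σ L) ∈ _
  rw [tau_monomial]
  have heq : monomial d (eig c d * 1) = C (eig c d) * monomial d (1 : L) := by
    rw [C_mul_monomial]
  rw [heq]
  exact Ideal.mul_mem_left _ _ (Ideal.subset_span ⟨d, hd, rfl⟩)

theorem ext_lemma (M : Set (σ →₀ ℕ))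
    (hinj : ∀ d e : σ →₀ ℕ, eig c d = eig c e → d = e) :
    ∀ N (f : MvPolynomial σ L), f.support.card ≤ N →
      f ∈ intClosure (Ideal.span ((fun d => monomial d (1 : L)) '' M)) →
      ∀ α ∈ f.support, ∃ i, 0 < i ∧ ∃ d ∈ msum M i, d ≤ i • α := by
  classical
  intro N
  induction N with
  | zero =>
    intro f hcard hf α hα
    rw [Finset.card_eq_zero.mp (le_antisymm hcard (Nat.zero_le _))] at hα
    exact absurd hα (Finset.notMem_empty α)
  | succ N ih =>
    intro f hcard hf α hα
    by_cases h1 : f.support.card ≤ 1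
    · -- singleton support
      have huniq := Finset.card_le_one.mp h1
      have hf_eq : f = monomial α (coeff α f) := by
        apply MvPolynomial.ext
        intro β
        classical
        rw [coeff_monomial]
        split_ifs with h
        · rw [h]
        · by_contra hne
          exact h (huniq α hα β (mem_support_iff.mpr fun hz => hne (by rw [hz])))
      obtain ⟨k, hk, cc, hcc, he⟩ := hf
      set a := coeff α f with ha
      have ha0 : a ≠ 0 := mem_support_iff.mp hα
      have hpow : ∀ m : ℕ, f ^ m = monomial (m • α) (a ^ m) := by
        intro m
        rw [hf_eq, monomial_pow]
      have h2 := congrArg (coeff (k • α)) he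
      rw [coeff_add, coeff_zero, hpow, coeff_monomial, if_pos rfl, coeff_sum] at h2
      by_contra hno
      push_neg at hno
      have hzero : ∀ i ∈ Finset.Icc 1 k, coeff (k • α) (cc i * f ^ (k - i)) = 0 := by
        intro i hi
        simp only [Finset.mem_Icc] at hi
        have hsplit : k • α = i • α + (k - i) • α := by
          rw [← add_smul, Nat.add_sub_cancel' hi.2]
        rw [hpow, hsplit, coeff_mul_monomial]
        have : coeff (i • α) (cc i) = 0 := by
          by_contra hnz
          have hmem : (i • α) ∈ (cc i).support := mem_support_iff.mpr hnz
          have hcci : cc i ∈ Ideal.span ((fun d => monomial d (1 : L)) '' msum M i) := by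
            rw [← span_monomial_pow]
            exact hcc i (Finset.mem_Icc.mpr hi)
          obtain ⟨d, hd, hdle⟩ := mem_ideal_span_monomial_image.mp hcci _ hmem
          exact hno i hi.1 d hd hdle
        rw [this, zero_mul]
      rw [Finset.sum_congr rfl hzero, Finset.sum_const_zero, add_zero] at h2
      exact pow_ne_zero k ha0 h2
    · -- at least two support elements
      have h2 : 1 < f.support.card := not_le.mp h1
      obtain ⟨β, hβ, hβα⟩ := Finset.exists_mem_ne h2 α
      set J' := Ideal.span ((fun d => monomial d (1 : L)) '' M) with hJ'
      have hτ : (tau c) f ∈ intClosure J' :=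
        map_mem_intClosure (tau c).toRingHom (tau_map_span_le M) hf
      have hscal : C (eig c β) * f ∈ intClosure J' := mul_mem_intClosure _ hf
      have hg : (tau c) f - C (eig c β) * f ∈ intClosure J' := sub_mem_intClosure hτ hscal
      set g := (tau c) f - C (eig c β) * f with hgdef
      have hcoeff : ∀ γ, coeff γ g = (eig c γ - eig c β) * coeff γ f := by
        intro γ
        rw [hgdef, coeff_sub, coeff_tau, coeff_C_mul, sub_mul]
      have hsubset : g.support ⊆ f.support.erase β := by
        intro γ hγ
        rw [mem_support_iff, hcoeff] at hγ
        rw [Finset.mem_erase, mem_support_iff]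
        refine ⟨?_, ?_⟩
        · rintro rfl
          simp at hγ
        · intro h
          exact hγ (by rw [h, mul_zero])
      have hαg : α ∈ g.support := by
        rw [mem_support_iff, hcoeff]
        apply mul_ne_zero
        · rw [sub_ne_zero]
          intro h
          exact hβα (hinj _ _ h).symm
        · exact mem_support_iff.mp hα
      have hcard2 : g.support.card ≤ N := by
        have := Finset.card_le_card hsubset
        rw [Finset.card_erase_of_mem hβ] at this
        omega
      exact ih g hcard2 hg α hαg

end Sext


section Sfinal

variable {K : Type*} [Field K] {n : ℕ}

/-- The exponent vectors of the generators of the edge ideal. -/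
def edgeExps (G : SimpleGraph (Fin n)) (w : Sym2 (Fin n) → ℕ) : Set (Fin n →₀ ℕ) :=
  {d | ∃ i j : Fin n, G.Adj i j ∧
    d = Finsupp.single i (w s(i, j)) + Finsupp.single j (w s(i, j))}

theorem edgeIdeal_eq_span (G : SimpleGraph (Fin n)) (w : Sym2 (Fin n) → ℕ) :
    edgeIdeal K G w = Ideal.span ((fun d => monomial d (1 : K)) '' edgeExps G w) := by
  unfold edgeIdeal
  congr 1
  ext m
  constructor
  · rintro ⟨i, j, hadj, rfl⟩
    exact ⟨_, ⟨i, j, hadj, rfl⟩,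
      by rw [X_pow_eq_monomial, X_pow_eq_monomial, monomial_mul, one_mul]⟩
  · rintro ⟨d, ⟨i, j, hadj, rfl⟩, rfl⟩
    exact ⟨i, j, hadj,
      by rw [X_pow_eq_monomial, X_pow_eq_monomial, monomial_mul, one_mul]⟩

end Sfinal

end EdgeIdealAux

open EdgeIdealAux

/-- If `H_ω` is an induced subgraph of `G_ω` and `I(G_ω)^k` is integrally closed
(`k ≥ 1`), then `I(H_ω)^k` is integrally closed. -/
theorem pow_edgeIdeal_induced_isIntClosed
    (K : Type*) [Field K] {n : ℕ} (G H : SimpleGraph (Fin n))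
    (wG wH : Sym2 (Fin n) → ℕ)
    (hwG : ∀ e ∈ G.edgeSet, 1 ≤ wG e) (hwH : ∀ e ∈ H.edgeSet, 1 ≤ wH e)
    (hind : IsInducedWeightedSubgraph G wG H wH)
    (k : ℕ) (hk : 0 < k)
    (hG : IsIntClosed (edgeIdeal K G wG ^ k)) :
    IsIntClosed (edgeIdeal K H wH ^ k) := by
  classical
  obtain ⟨A, hA, hw⟩ := hind
  set DG := edgeExps G wG with hDG
  set DH := edgeExps H wH with hDH
  have hDHG : DH ⊆ DG := by
    rintro d ⟨i, j, hadj, rfl⟩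
    exact ⟨i, j, ((hA i j).mp hadj).2.2, by rw [hw i j hadj]⟩
  have hDHsupp : ∀ d ∈ DH, ∀ v : Fin n, v ∉ A → d v = 0 := by
    rintro d ⟨i, j, hadj, rfl⟩ v hv
    obtain ⟨hiA, hjA, -⟩ := (hA i j).mp hadj
    have hvi : i ≠ v := fun h => hv (h ▸ hiA)
    have hvj : j ≠ v := fun h => hv (h ▸ hjA)
    rw [Finsupp.add_apply, Finsupp.single_eq_of_ne' hvi, Finsupp.single_eq_of_ne' hvj, add_zero]
  have hMHsupp : ∀ i : ℕ, ∀ d ∈ msum DH i, ∀ v : Fin n, v ∉ A → d v = 0 := by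
    intro i
    induction i with
    | zero =>
      rintro d hd v hv
      rw [Set.mem_singleton_iff.mp hd]
      rfl
    | succ i ih =>
      rintro d ⟨a, ha, b, hb, rfl⟩ v hv
      rw [Finsupp.add_apply, ih a ha v hv, hDHsupp b hb v hv]
  have hMHsupp2 : ∀ i : ℕ, ∀ d ∈ msum (msum DH k) i, ∀ v : Fin n, v ∉ A → d v = 0 := by
    intro i
    induction i with
    | zero =>
      rintro d hd v hv
      rw [Set.mem_singleton_iff.mp hd]
      rfl
    | succ i ih =>
      rintro d ⟨a, ha, b, hb, rfl⟩ v hv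
      rw [Finsupp.add_apply, ih a ha v hv, hMHsupp k b hb v hv]
  have hJ : edgeIdeal K H wH ^ k
      = Ideal.span ((fun d => monomial d (1 : K)) '' msum DH k) := by
    rw [edgeIdeal_eq_span, span_monomial_pow]
  have hI : edgeIdeal K G wG ^ k
      = Ideal.span ((fun d => monomial d (1 : K)) '' msum DG k) := by
    rw [edgeIdeal_eq_span, span_monomial_pow]
  show intClosure _ = _
  apply Set.Subset.antisymm
  swap
  · intro x hx
    exact mem_intClosure_of_mem hx
  intro f hf
  set L := FractionRing (MvPolynomial (Fin n) K) with hL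
  set ψ : MvPolynomial (Fin n) K →+* MvPolynomial (Fin n) L :=
    (MvPolynomial.map (algebraMap K L) : MvPolynomial (Fin n) K →+* MvPolynomial (Fin n) L)
    with hψ
  have hψJ : Ideal.map ψ (edgeIdeal K H wH ^ k)
      ≤ Ideal.span ((fun d => monomial d (1 : L)) '' msum DH k) := by
    rw [hJ, Ideal.map_span, Ideal.span_le]
    rintro p ⟨q, ⟨d, hd, rfl⟩, rfl⟩
    show ψ (monomial d 1) ∈ _
    rw [hψ, MvPolynomial.map_monomial, map_one]
    exact Ideal.subset_span ⟨d, hd, rfl⟩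
  have hf' : ψ f ∈ intClosure (Ideal.span ((fun d => monomial d (1 : L)) '' msum DH k)) :=
    map_mem_intClosure ψ hψJ hf
  set cL : Fin n → L := fun j => algebraMap (MvPolynomial (Fin n) K) L (X j) with hcL
  have heig : ∀ d : Fin n →₀ ℕ,
      eig cL d = algebraMap (MvPolynomial (Fin n) K) L (monomial d (1 : K)) := by
    intro d
    rw [eig, monomial_eq, C_1, one_mul, Finsupp.prod, Finsupp.prod, map_prod]
    apply Finset.prod_congr rfl
    intro j _
    rw [map_pow]
  have hinj : ∀ d e : Fin n →₀ ℕ, eig cL d = eig cL e → d = e := by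
    intro d e h
    rw [heig, heig] at h
    have h2 := IsFractionRing.injective (MvPolynomial (Fin n) K) L h
    by_contra hne
    have h3 := congrArg (coeff d) h2
    rw [coeff_monomial, coeff_monomial, if_pos rfl, if_neg (fun hh => hne hh.symm)] at h3
    exact one_ne_zero h3
  rw [hJ]
  rw [SetLike.mem_coe, mem_ideal_span_monomial_image]
  intro α hα
  have hsupp : (ψ f).support = f.support :=
    support_map_of_injective f (algebraMap K L).injective
  have hα' : α ∈ (ψ f).support := by rw [hsupp]; exact hα
  obtain ⟨i, hi, d, hd, hdle⟩ :=
    ext_lemma (msum DH k) hinj (ψ f).support.card (ψ f) le_rfl hf' α hα'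
  set αA : Fin n →₀ ℕ := α.filter (fun v => v ∈ A) with hαA
  have hαA_le : αA ≤ α := by
    rw [Finsupp.le_def]
    intro v
    rw [hαA, Finsupp.filter_apply]
    split_ifs
    · exact le_rfl
    · exact Nat.zero_le _
  have hd_le_iαA : d ≤ i • αA := by
    rw [Finsupp.le_def]
    intro v
    by_cases hv : v ∈ A
    · have h4 := Finsupp.le_def.mp hdle v
      rw [Finsupp.smul_apply] at h4 ⊢
      rw [hαA, Finsupp.filter_apply, if_pos hv]
      exact h4
    · rw [hMHsupp2 i d hd v hv]
      exact Nat.zero_le _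
  have hstep : monomial αA (1 : K) ∈ intClosure (edgeIdeal K G wG ^ k) := by
    refine ⟨i, hi, fun j => if j = i then -(monomial (i • αA) (1 : K)) else 0, ?_, ?_⟩
    · intro j hj
      dsimp only
      split_ifs with hji
      · subst hji
        rw [hI, span_monomial_pow]
        exact neg_mem (monomial_one_mem_span_iff.mpr
          ⟨d, msum_mono (msum_mono hDHG k) j hd, hd_le_iαA⟩)
      · exact Ideal.zero_mem _
    · rw [monomial_pow, one_pow,
        Finset.sum_eq_single_of_mem i (Finset.mem_Icc.mpr ⟨hi, le_rfl⟩)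
          (fun j _ hji => by dsimp only; rw [if_neg hji, zero_mul])]
      dsimp only
      rw [if_pos rfl, Nat.sub_self, pow_zero, mul_one, add_neg_cancel]
  have hG' : intClosure (edgeIdeal K G wG ^ k) = ↑(edgeIdeal K G wG ^ k) := hG
  rw [hG', SetLike.mem_coe, hI, monomial_one_mem_span_iff] at hstep
  obtain ⟨e, he, hele⟩ := hstep
  have htrans : e ∈ msum DH k := by
    refine msum_trans ?_ k e he hele
    rintro g ⟨u, v, hadj, rfl⟩ hgle
    have hw1 : 1 ≤ wG s(u, v) := hwG _ ((G.mem_edgeSet).mpr hadj)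
    have huv : u ≠ v := hadj.ne
    have hgu : (Finsupp.single u (wG s(u, v)) + Finsupp.single v (wG s(u, v))) u
        = wG s(u, v) := by
      rw [Finsupp.add_apply, Finsupp.single_eq_same, Finsupp.single_eq_of_ne' huv.symm, add_zero]
    have hgv : (Finsupp.single u (wG s(u, v)) + Finsupp.single v (wG s(u, v))) v
        = wG s(u, v) := by
      rw [Finsupp.add_apply, Finsupp.single_eq_same, Finsupp.single_eq_of_ne' huv, zero_add]
    have huA : u ∈ A := by
      by_contra huA
      have h0 : αA u = 0 := by rw [hαA, Finsupp.filter_apply, if_neg huA]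
      have h5 := Finsupp.le_def.mp hgle u
      rw [hgu, h0] at h5
      omega
    have hvA : v ∈ A := by
      by_contra hvA
      have h0 : αA v = 0 := by rw [hαA, Finsupp.filter_apply, if_neg hvA]
      have h5 := Finsupp.le_def.mp hgle v
      rw [hgv, h0] at h5
      omega
    have hHadj : H.Adj u v := (hA u v).mpr ⟨huA, hvA, hadj⟩
    exact ⟨u, v, hHadj, by rw [hw u v hHadj]⟩
  exact ⟨e, htrans, le_trans hele hαA_le⟩
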